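/- Let K = ℚ(√D) with D ≥ 2 squarefree and α = (v_j - 1)β_j + (v_{j+1} - 1)β_{j+1} for some j ∈ ℤ, where (β_j) is the ordered sequence of indecomposables with v_kβ_k = β_{k-1} + β_{k+1}. Then α = β_{j-1} + β_{j+2}, and α has exactly 2 partitions into indecomposable parts if and only if (v_{j-1}, v_j, v_{j+1}, v_{j+2}) ≠ (2, 2, 2, 2). -/

import Mathlib

noncomputable section

/-- `ω_D`: the standard generator of the ring of integers of `ℚ(√D)`. -/
def omegaD (D : ℕ) : ℝ := if D % 4 = 1 then (1 + Real.sqrt D) / 2 else Real.sqrt D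

/-- The Galois conjugate of `ω_D`. -/
def omegaD' (D : ℕ) : ℝ := if D % 4 = 1 then (1 - Real.sqrt D) / 2 else -Real.sqrt D

/-- Elements of `O_K` in coordinates: `(x, y)` represents `x + y·ω_D`. -/
abbrev OK : Type := ℤ × ℤ

/-- First real embedding. -/
def emb1 (D : ℕ) (a : OK) : ℝ := a.1 + a.2 * omegaD D

/-- Second real embedding (Galois conjugate). -/
def emb2 (D : ℕ) (a : OK) : ℝ := a.1 + a.2 * omegaD' D

/-- Galois conjugation on `O_K`. -/
def conjOK (D : ℕ) (a : OK) : OK := (a.1 + (if D % 4 = 1 then (1 : ℤ) else 0) * a.2, -a.2)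

/-- Total positivity. -/
def TotPos (D : ℕ) (a : OK) : Prop := 0 < emb1 D a ∧ 0 < emb2 D a

/-- The field norm. -/
def Nm (D : ℕ) (a : OK) : ℝ := emb1 D a * emb2 D a

/-- Indecomposability: totally positive and not a sum of two totally positive elements. -/
def Indec (D : ℕ) (a : OK) : Prop :=
  TotPos D a ∧ ¬ ∃ b c : OK, TotPos D b ∧ TotPos D c ∧ a = b + c

/-- Number of partitions of `α` into indecomposable parts (`p_K(α|I)`). -/
def pKI (D : ℕ) (α : OK) : ℕ :=
  Set.ncard {s : Multiset OK | (∀ x ∈ s, Indec D x) ∧ s.sum = α}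

/-- Number of partitions of `α` into totally positive parts (`p_K(α)`). -/
def pK (D : ℕ) (α : OK) : ℕ :=
  Set.ncard {s : Multiset OK | (∀ x ∈ s, TotPos D x) ∧ s.sum = α}

/-- Discriminant of `ℚ(√D)`. -/
def disc (D : ℕ) : ℕ := if D % 4 = 1 then D else 4 * D

/-- The ordered two-sided sequence of indecomposables together with
the coefficients `v j ≥ 2` from the Hejda–Kala relation `v_j β_j = β_{j-1} + β_{j+1}`. -/
structure BetaSeq (D : ℕ) (β : ℤ → OK) (v : ℤ → ℤ) : Prop where
  indec : ∀ j, Indec D (β j)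
  surj : ∀ a : OK, Indec D a → ∃ j, β j = a
  mono : StrictMono fun j => emb1 D (β j)
  zero : β 0 = (1, 0)
  conj_eq : ∀ j, β (-j) = conjOK D (β j)
  v_two_le : ∀ j, 2 ≤ v j
  v_symm : ∀ j, v (-j) = v j
  rel : ∀ j, v j • β j = β (j - 1) + β (j + 1)

/-- The continued fraction data of `ω_D = [⌈u₀/2⌉, \overline{u₁, …, u_s}]` (with `u_s = u_0`),
with tails `γ_0 = ω_D`, `γ_i = [u_i, u_{i+1}, …]` for `i ≥ 1`. -/
structure CFData (D : ℕ) (u : ℕ → ℕ) (γ : ℕ → ℝ) : Prop where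
  gamma_zero : γ 0 = omegaD D
  u_zero : (u 0 : ℤ) = 2 * ⌊omegaD D⌋ - (if D % 4 = 1 then 1 else 0)
  head : omegaD D = (⌊omegaD D⌋ : ℝ) + 1 / γ 1
  step : ∀ i, 1 ≤ i → γ i = u i + 1 / γ (i + 1)
  one_lt : ∀ i, 1 ≤ i → 1 < γ i
  floor_eq : ∀ i, 1 ≤ i → (u i : ℤ) = ⌊γ i⌋
  period : ∃ s, 1 ≤ s ∧ u s = u 0 ∧ ∀ i, 1 ≤ i → u (i + s) = u i

/-- The convergents `α_i = p_i + q_i ξ_D`, indexed by `i ≥ -1`. -/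
structure ConvData (D : ℕ) (u : ℕ → ℕ) (a : ℤ → OK) : Prop where
  neg_one : a (-1) = (1, 0)
  zero : a 0 = (⌊omegaD D⌋, 0) + (if D % 4 = 1 then ((-1 : ℤ), (1 : ℤ)) else (0, 1))
  recur : ∀ i : ℤ, -1 ≤ i → a (i + 2) = (u (i + 2).toNat : ℤ) • a (i + 1) + a i

/-- Semiconvergents `α_{i,r} = α_i + r·α_{i+1}`. -/
def semiconv (a : ℤ → OK) (i r : ℤ) : OK := a i + r • a (i + 1)

lemma emb1_add (D : ℕ) (a b : OK) : emb1 D (a + b) = emb1 D a + emb1 D b := by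
  simp [emb1, Prod.fst_add, Prod.snd_add]; ring
lemma emb2_add (D : ℕ) (a b : OK) : emb2 D (a + b) = emb2 D a + emb2 D b := by
  simp [emb2, Prod.fst_add, Prod.snd_add]; ring
lemma emb1_zsmul (D : ℕ) (n : ℤ) (a : OK) : emb1 D (n • a) = n * emb1 D a := by
  simp [emb1, Prod.smul_fst, Prod.smul_snd, smul_eq_mul]; push_cast; ring
lemma emb2_zsmul (D : ℕ) (n : ℤ) (a : OK) : emb2 D (n • a) = n * emb2 D a := by
  simp [emb2, Prod.smul_fst, Prod.smul_snd, smul_eq_mul]; push_cast; ring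
lemma emb1_conj (D : ℕ) (a : OK) : emb1 D (conjOK D a) = emb2 D a := by
  by_cases h : D % 4 = 1 <;> simp [emb1, emb2, conjOK, omegaD, omegaD', h] <;> push_cast <;> ring


lemma emb1_zero (D : ℕ) : emb1 D 0 = 0 := by simp [emb1]
lemma emb2_zero (D : ℕ) : emb2 D 0 = 0 := by simp [emb2]
lemma emb1_sum (D : ℕ) (s : Multiset OK) : emb1 D s.sum = (s.map (emb1 D)).sum := by
  induction s using Multiset.induction_on with
  | empty => simp [emb1_zero]
  | cons a s ih => simp [emb1_add, ih]
lemma emb2_sum (D : ℕ) (s : Multiset OK) : emb2 D s.sum = (s.map (emb2 D)).sum := by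
  induction s using Multiset.induction_on with
  | empty => simp [emb2_zero]
  | cons a s ih => simp [emb2_add, ih]

namespace S11

variable {D : ℕ} {β : ℤ → OK} {v : ℤ → ℤ}

/-- `e k`, the first embedding of `β k`. -/
def ee (D : ℕ) (β : ℤ → OK) (k : ℤ) : ℝ := emb1 D (β k)
/-- `f k`, the second embedding of `β k`. -/
def ff (D : ℕ) (β : ℤ → OK) (k : ℤ) : ℝ := emb2 D (β k)

lemma ee_pos (hβ : BetaSeq D β v) (k : ℤ) : 0 < ee D β k := (hβ.indec k).1.1
lemma ff_pos (hβ : BetaSeq D β v) (k : ℤ) : 0 < ff D β k := (hβ.indec k).1.2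

lemma ee_lt (hβ : BetaSeq D β v) {k k' : ℤ} (h : k < k') : ee D β k < ee D β k' := hβ.mono h
lemma ee_le (hβ : BetaSeq D β v) {k k' : ℤ} (h : k ≤ k') : ee D β k ≤ ee D β k' :=
  hβ.mono.monotone h

lemma ff_eq (hβ : BetaSeq D β v) (k : ℤ) : ff D β k = ee D β (-k) := by
  rw [ee, ff, hβ.conj_eq k, emb1_conj]

lemma ff_lt (hβ : BetaSeq D β v) {k k' : ℤ} (h : k < k') : ff D β k' < ff D β k := by
  rw [ff_eq hβ, ff_eq hβ]; exact hβ.mono (by omega)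
lemma ff_le (hβ : BetaSeq D β v) {k k' : ℤ} (h : k ≤ k') : ff D β k' ≤ ff D β k := by
  rw [ff_eq hβ, ff_eq hβ]; exact hβ.mono.monotone (by omega)

lemma erec (hβ : BetaSeq D β v) (k : ℤ) :
    (v k : ℝ) * ee D β k = ee D β (k - 1) + ee D β (k + 1) := by
  have h := congrArg (emb1 D) (hβ.rel k)
  rwa [emb1_zsmul, emb1_add] at h

lemma frec (hβ : BetaSeq D β v) (k : ℤ) :
    (v k : ℝ) * ff D β k = ff D β (k - 1) + ff D β (k + 1) := by
  have h := congrArg (emb2 D) (hβ.rel k)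
  rwa [emb2_zsmul, emb2_add] at h

lemma v_real (hβ : BetaSeq D β v) (k : ℤ) : (2 : ℝ) ≤ (v k : ℝ) := by
  exact_mod_cast hβ.v_two_le k

/-- gaps of `e`. -/
def gg (D : ℕ) (β : ℤ → OK) (k : ℤ) : ℝ := ee D β k - ee D β (k - 1)
/-- gaps of `f`. -/
def hh (D : ℕ) (β : ℤ → OK) (k : ℤ) : ℝ := ff D β k - ff D β (k - 1)

lemma gg_pos (hβ : BetaSeq D β v) (k : ℤ) : 0 < gg D β k := by
  have := ee_lt hβ (show k - 1 < k by omega); rw [gg]; linarith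
lemma hh_neg (hβ : BetaSeq D β v) (k : ℤ) : hh D β k < 0 := by
  have := ff_lt hβ (show k - 1 < k by omega); rw [hh]; linarith

lemma gg_step (hβ : BetaSeq D β v) (k : ℤ) :
    gg D β (k + 1) = gg D β k + ((v k : ℝ) - 2) * ee D β k := by
  have h := erec hβ k
  rw [gg, gg, add_sub_cancel_right]
  linarith [h]

lemma hh_step (hβ : BetaSeq D β v) (k : ℤ) :
    hh D β (k + 1) = hh D β k + ((v k : ℝ) - 2) * ff D β k := by
  have h := frec hβ k
  rw [hh, hh, add_sub_cancel_right]
  linarith [h]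

lemma gg_mono (hβ : BetaSeq D β v) {k k' : ℤ} (h : k ≤ k') : gg D β k ≤ gg D β k' := by
  refine Int.le_induction (motive := fun n _ => gg D β k ≤ gg D β n) (le_refl _) (fun n hn ih => ?_) k' h
  show gg D β k ≤ gg D β (n+1)
  rw [gg_step hβ n]
  linarith [(ih : gg D β k ≤ gg D β n), mul_nonneg (show (0:ℝ) ≤ (v n : ℝ) - 2 by linarith [v_real hβ n]) (ee_pos hβ n).le]

lemma hh_mono (hβ : BetaSeq D β v) {k k' : ℤ} (h : k ≤ k') : hh D β k ≤ hh D β k' := by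
  refine Int.le_induction (motive := fun n _ => hh D β k ≤ hh D β n) (le_refl _) (fun n hn ih => ?_) k' h
  show hh D β k ≤ hh D β (n+1)
  rw [hh_step hβ n]
  linarith [(ih : hh D β k ≤ hh D β n), mul_nonneg (show (0:ℝ) ≤ (v n : ℝ) - 2 by linarith [v_real hβ n]) (ff_pos hβ n).le]

/-- generic downward telescoping -/
lemma tele_down (val gap : ℤ → ℝ) (hgap : ∀ k, gap k = val k - val (k - 1))
    (hmono : ∀ ⦃k k' : ℤ⦄, k ≤ k' → gap k ≤ gap k') :
    ∀ (n : ℕ) (k : ℤ), val k - n * gap k ≤ val (k - n) := by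
  intro n
  induction n with
  | zero => intro k; simp
  | succ n ih =>
    intro k
    have h1 := ih k
    have h2 : val (k - (n + 1 : ℕ)) = val ((k - n) - 1) := by
      congr 1; push_cast; ring
    have h3 := hgap (k - n)
    have h4 := hmono (show k - (n : ℤ) ≤ k by omega)
    have h6 : k - (n : ℤ) - 1 = k - n - 1 := by ring
    rw [h2]
    push_cast
    linarith [h1, h3, h4]

/-- generic upward telescoping -/
lemma tele_up (val gap : ℤ → ℝ) (hgap : ∀ k, gap k = val k - val (k - 1))
    (hmono : ∀ ⦃k k' : ℤ⦄, k ≤ k' → gap k ≤ gap k') :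
    ∀ (n : ℕ) (k : ℤ), val k + n * gap (k + 1) ≤ val (k + n) := by
  intro n
  induction n with
  | zero => intro k; simp
  | succ n ih =>
    intro k
    have h1 := ih k
    have h2 : val (k + (n + 1 : ℕ)) = val ((k + n) + 1) := by
      congr 1; push_cast; ring
    have h3 := hgap (k + n + 1)
    have h4 := hmono (show k + 1 ≤ k + (n : ℤ) + 1 by omega)
    rw [h2]
    push_cast
    have h5 : val (k + n + 1) = val (k + n) + gap (k + n + 1) := by
      have h6 : k + (n : ℤ) + 1 - 1 = k + n := by ring
      rw [h3, h6]; ring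
    linarith [h1, h4, h5]

end S11

section S11aux
namespace S11

open Multiset

lemma two_val_struct (j : ℤ) (r : Multiset ℤ) (hall : ∀ k ∈ r, k = j ∨ k = j + 1) :
    ∃ a b : ℕ, r = Multiset.replicate a j + Multiset.replicate b (j + 1) := by
  refine ⟨r.count j, r.count (j + 1), ?_⟩
  ext x
  rw [Multiset.count_add, Multiset.count_replicate, Multiset.count_replicate]
  split_ifs with ha hb hb
  · exfalso; omega
  · subst ha; simp
  · subst hb; simp
  · have hx : x ∉ r := fun hx => by rcases hall x hx with h | h <;> omega
    simp [Multiset.count_eq_zero.mpr hx]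

lemma card_le_one_cases (r : Multiset ℤ) (h : Multiset.card r ≤ 1) :
    r = 0 ∨ ∃ l, r = {l} := by
  rcases Nat.le_one_iff_eq_zero_or_eq_one.mp h with h0 | h1
  · exact Or.inl (Multiset.card_eq_zero.mp h0)
  · exact Or.inr (Multiset.card_eq_one.mp h1)

lemma card_small (w : ℤ → ℝ) (r u : Multiset ℤ) (c T : ℝ) (hc : 0 < c)
    (hr : ∀ k ∈ r, c ≤ w k) (hu : ∀ k ∈ u, 0 ≤ w k)
    (hsum : ((r + u).map w).sum = T) (hT : T < 2 * c) : Multiset.card r ≤ 1 := by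
  by_contra hcard
  push_neg at hcard
  have h1 : (Multiset.card (r.map w)) • c ≤ (r.map w).sum := by
    apply Multiset.card_nsmul_le_sum
    intro x hx
    obtain ⟨k, hk, rfl⟩ := Multiset.mem_map.mp hx
    exact hr k hk
  rw [Multiset.card_map] at h1
  have h2 : (0:ℝ) ≤ (u.map w).sum := by
    apply Multiset.sum_nonneg
    intro x hx
    obtain ⟨k, hk, rfl⟩ := Multiset.mem_map.mp hx
    exact hu k hk
  rw [Multiset.map_add, Multiset.sum_add] at hsum
  have h3 : (2:ℝ) ≤ (Multiset.card r : ℝ) := by exact_mod_cast hcard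
  have h4 : (Multiset.card r : ℝ) * c ≤ (r.map w).sum := by
    rw [nsmul_eq_mul] at h1; exact h1
  nlinarith

lemma indep_zero {x y e0 e1' f0 f1' : ℝ} (he : x * e0 = y * e1') (hf : x * f0 = y * f1')
    (he0 : 0 < e0) (hee : e0 < e1') (hf1 : 0 < f1') (hff : f1' < f0) : x = 0 ∧ y = 0 := by
  have key : x * (e0 * f1' - f0 * e1') = 0 := by linear_combination f1' * he - e1' * hf
  have hlt : e0 * f1' < e1' * f0 := mul_lt_mul'' hee hff he0.le hf1.le
  have hne : e0 * f1' - f0 * e1' ≠ 0 := by nlinarith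
  have hx : x = 0 := by
    rcases mul_eq_zero.mp key with h | h
    · exact h
    · exact absurd h hne
  refine ⟨hx, ?_⟩
  rw [hx, zero_mul] at he
  have he1 : e1' ≠ 0 := ne_of_gt (lt_trans he0 hee)
  rcases mul_eq_zero.mp he.symm with h | h
  · exact h
  · exact absurd h he1

end S11
end S11aux

section S11main
namespace S11

variable {D : ℕ} {β : ℤ → OK} {v : ℤ → ℤ}

lemma part1_eq (hβ : BetaSeq D β v) (j : ℤ) (α : OK)
    (hα : α = (v j - 1) • β j + (v (j + 1) - 1) • β (j + 1)) :
    α = β (j - 1) + β (j + 2) := by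
  have h1 := hβ.rel j
  have h2 := hβ.rel (j + 1)
  rw [show j + 1 - 1 = j by ring, show j + 1 + 1 = j + 2 by ring] at h2
  rw [hα, sub_smul, sub_smul, one_smul, h1, h2]
  abel

lemma beta_inj (hβ : BetaSeq D β v) : Function.Injective β :=
  fun a b hab => hβ.mono.injective (congrArg (emb1 D) hab)

lemma split3 (j : ℤ) (t : Multiset ℤ) :
    t = t.filter (fun k => k ≤ j - 1) + (t.filter (fun k => j + 2 ≤ k)
      + t.filter (fun k => j - 1 < k ∧ k < j + 2)) := by
  ext x
  simp only [Multiset.count_add, Multiset.count_filter]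
  split_ifs <;> omega

lemma exists_index (hβ : BetaSeq D β v) (s : Multiset OK) (hind : ∀ x ∈ s, Indec D x) :
    ∃ t : Multiset ℤ, t.map β = s := by
  induction s using Multiset.induction_on with
  | empty => exact ⟨0, rfl⟩
  | cons a s ih =>
    obtain ⟨t, ht⟩ := ih (fun x hx => hind x (Multiset.mem_cons_of_mem hx))
    obtain ⟨k, hk⟩ := hβ.surj a (hind a (Multiset.mem_cons_self a s))
    exact ⟨k ::ₘ t, by rw [Multiset.map_cons, ht, hk]⟩

set_option maxHeartbeats 1000000 in
lemma main_cases (hD : 2 ≤ D) (hsq : Squarefree D) (hβ : BetaSeq D β v) (j : ℤ) (α : OK)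
    (hα : α = (v j - 1) • β j + (v (j + 1) - 1) • β (j + 1))
    (s : Multiset OK) (hind : ∀ x ∈ s, Indec D x) (hsum : s.sum = α) :
    s = β (j - 1) ::ₘ {β (j + 2)} ∨
      s = Multiset.replicate (v j - 1).toNat (β j) +
          Multiset.replicate (v (j + 1) - 1).toNat (β (j + 1)) ∨
      (v (j - 1) = 2 ∧ v j = 2 ∧ v (j + 1) = 2 ∧ v (j + 2) = 2) := by
  classical
  have hpart1 := part1_eq hβ j α hα
  -- basic real facts
  have epos : ∀ k, 0 < emb1 D (β k) := fun k => ee_pos hβ k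
  have fpos : ∀ k, 0 < emb2 D (β k) := fun k => ff_pos hβ k
  have elt : ∀ {k k' : ℤ}, k < k' → emb1 D (β k) < emb1 D (β k') := fun h => ee_lt hβ h
  have ele : ∀ {k k' : ℤ}, k ≤ k' → emb1 D (β k) ≤ emb1 D (β k') := fun h => ee_le hβ h
  have flt : ∀ {k k' : ℤ}, k < k' → emb2 D (β k') < emb2 D (β k) := fun h => ff_lt hβ h
  have fle : ∀ {k k' : ℤ}, k ≤ k' → emb2 D (β k') ≤ emb2 D (β k) := fun h => ff_le hβ h
  have hv2 : ∀ k, (2:ℝ) ≤ (v k : ℝ) := v_real hβ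
  have er2 : (v j : ℝ) * emb1 D (β j) = emb1 D (β (j-1)) + emb1 D (β (j+1)) := erec hβ j
  have fr2 : (v j : ℝ) * emb2 D (β j) = emb2 D (β (j-1)) + emb2 D (β (j+1)) := frec hβ j
  have er1 : (v (j-1) : ℝ) * emb1 D (β (j-1)) = emb1 D (β (j-2)) + emb1 D (β j) := by
    have h := erec hβ (j-1); rwa [show j-1-1 = j-2 by ring, show j-1+1 = j by ring] at h
  have fr1 : (v (j-1) : ℝ) * emb2 D (β (j-1)) = emb2 D (β (j-2)) + emb2 D (β j) := by
    have h := frec hβ (j-1); rwa [show j-1-1 = j-2 by ring, show j-1+1 = j by ring] at h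
  have er3 : (v (j+1) : ℝ) * emb1 D (β (j+1)) = emb1 D (β j) + emb1 D (β (j+2)) := by
    have h := erec hβ (j+1); rwa [show j+1-1 = j by ring, show j+1+1 = j+2 by ring] at h
  have fr3 : (v (j+1) : ℝ) * emb2 D (β (j+1)) = emb2 D (β j) + emb2 D (β (j+2)) := by
    have h := frec hβ (j+1); rwa [show j+1-1 = j by ring, show j+1+1 = j+2 by ring] at h
  have er4 : (v (j+2) : ℝ) * emb1 D (β (j+2)) = emb1 D (β (j+1)) + emb1 D (β (j+3)) := by
    have h := erec hβ (j+2); rwa [show j+2-1 = j+1 by ring, show j+2+1 = j+3 by ring] at h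
  have fr4 : (v (j+2) : ℝ) * emb2 D (β (j+2)) = emb2 D (β (j+1)) + emb2 D (β (j+3)) := by
    have h := frec hβ (j+2); rwa [show j+2-1 = j+1 by ring, show j+2+1 = j+3 by ring] at h
  -- index multiset
  obtain ⟨t, hts⟩ := exists_index hβ s hind
  obtain ⟨tl, htl⟩ : ∃ r, r = t.filter (fun k => k ≤ j - 1) := ⟨_, rfl⟩
  obtain ⟨th, hth⟩ : ∃ r, r = t.filter (fun k => j + 2 ≤ k) := ⟨_, rfl⟩
  obtain ⟨tm, htm⟩ : ∃ r, r = t.filter (fun k => j - 1 < k ∧ k < j + 2) := ⟨_, rfl⟩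
  have htdecomp : t = tl + (th + tm) := by rw [htl, hth, htm]; exact split3 j t
  have hmem_tl : ∀ k ∈ tl, k ≤ j - 1 := by
    intro k hk; rw [htl] at hk; exact (Multiset.mem_filter.mp hk).2
  have hmem_th : ∀ k ∈ th, j + 2 ≤ k := by
    intro k hk; rw [hth] at hk; exact (Multiset.mem_filter.mp hk).2
  have hmem_tm : ∀ k ∈ tm, k = j ∨ k = j + 1 := by
    intro k hk; rw [htm] at hk; have h1 := (Multiset.mem_filter.mp hk).2; omega
  obtain ⟨aN, bN, htmeq⟩ := two_val_struct j tm hmem_tm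
  have hsum_t : (t.map β).sum = α := by rw [hts]; exact hsum
  -- real sum equations
  have htmE : (tm.map (fun k => emb1 D (β k))).sum
      = (aN:ℝ) * emb1 D (β j) + (bN:ℝ) * emb1 D (β (j+1)) := by
    rw [htmeq]
    simp [Multiset.map_add, Multiset.sum_add, Multiset.map_replicate, Multiset.sum_replicate,
      nsmul_eq_mul]
  have htmF : (tm.map (fun k => emb2 D (β k))).sum
      = (aN:ℝ) * emb2 D (β j) + (bN:ℝ) * emb2 D (β (j+1)) := by
    rw [htmeq]
    simp [Multiset.map_add, Multiset.sum_add, Multiset.map_replicate, Multiset.sum_replicate,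
      nsmul_eq_mul]
  have hE3 : (tl.map (fun k => emb1 D (β k))).sum + (th.map (fun k => emb1 D (β k))).sum
      + ((aN:ℝ) * emb1 D (β j) + (bN:ℝ) * emb1 D (β (j+1)))
      = emb1 D (β (j-1)) + emb1 D (β (j+2)) := by
    have h1 := congrArg (emb1 D) hsum_t
    rw [emb1_sum, Multiset.map_map, htdecomp] at h1
    simp only [Multiset.map_add, Multiset.sum_add, Function.comp] at h1
    have hα1 : emb1 D α = emb1 D (β (j-1)) + emb1 D (β (j+2)) := by rw [hpart1, emb1_add]
    linarith [h1, htmE, hα1]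
  have hF3 : (tl.map (fun k => emb2 D (β k))).sum + (th.map (fun k => emb2 D (β k))).sum
      + ((aN:ℝ) * emb2 D (β j) + (bN:ℝ) * emb2 D (β (j+1)))
      = emb2 D (β (j-1)) + emb2 D (β (j+2)) := by
    have h1 := congrArg (emb2 D) hsum_t
    rw [emb2_sum, Multiset.map_map, htdecomp] at h1
    simp only [Multiset.map_add, Multiset.sum_add, Function.comp] at h1
    have hα1 : emb2 D α = emb2 D (β (j-1)) + emb2 D (β (j+2)) := by rw [hpart1, emb2_add]
    linarith [h1, htmF, hα1]
  -- cardinality bounds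
  have hcard_tl : Multiset.card tl ≤ 1 := by
    apply card_small (fun k => emb2 D (β k)) tl (th + tm) (emb2 D (β (j-1)))
      (emb2 D (β (j-1)) + emb2 D (β (j+2))) (fpos (j-1))
    · intro k hk; exact fle (hmem_tl k hk)
    · intro k hk; exact (fpos k).le
    · simp only [Multiset.map_add, Multiset.sum_add]
      linarith [hF3, htmF]
    · linarith [flt (show (j-1:ℤ) < j+2 by omega)]
  have hcard_th : Multiset.card th ≤ 1 := by
    apply card_small (fun k => emb1 D (β k)) th (tl + tm) (emb1 D (β (j+2)))
      (emb1 D (β (j-1)) + emb1 D (β (j+2))) (epos (j+2))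
    · intro k hk; exact ele (hmem_th k hk)
    · intro k hk; exact (epos k).le
    · simp only [Multiset.map_add, Multiset.sum_add]
      linarith [hE3, htmE]
    · linarith [elt (show (j-1:ℤ) < j+2 by omega)]
  have haN0 : (0:ℝ) ≤ (aN:ℝ) := Nat.cast_nonneg aN
  have hbN0 : (0:ℝ) ≤ (bN:ℝ) := Nat.cast_nonneg bN
  rcases card_le_one_cases tl hcard_tl with htl0 | ⟨l, htl1⟩ <;>
    rcases card_le_one_cases th hcard_th with hth0 | ⟨m, hth1⟩
  · -- Case i : tl = 0, th = 0
    rw [htl0, hth0] at hE3 hF3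
    simp only [Multiset.map_zero, Multiset.sum_zero, zero_add, add_zero] at hE3 hF3
    have hαE : emb1 D α = ((v j : ℝ) - 1) * emb1 D (β j)
        + ((v (j+1) : ℝ) - 1) * emb1 D (β (j+1)) := by
      rw [hα, emb1_add, emb1_zsmul, emb1_zsmul]; push_cast; ring
    have hαF : emb2 D α = ((v j : ℝ) - 1) * emb2 D (β j)
        + ((v (j+1) : ℝ) - 1) * emb2 D (β (j+1)) := by
      rw [hα, emb2_add, emb2_zsmul, emb2_zsmul]; push_cast; ring
    have hα1 : emb1 D α = emb1 D (β (j-1)) + emb1 D (β (j+2)) := by rw [hpart1, emb1_add]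
    have hα2 : emb2 D α = emb2 D (β (j-1)) + emb2 D (β (j+2)) := by rw [hpart1, emb2_add]
    have hcombE : ((v j : ℝ) - 1) * emb1 D (β j) + ((v (j+1) : ℝ) - 1) * emb1 D (β (j+1))
        = emb1 D (β (j-1)) + emb1 D (β (j+2)) := hαE.symm.trans hα1
    have hcombF : ((v j : ℝ) - 1) * emb2 D (β j) + ((v (j+1) : ℝ) - 1) * emb2 D (β (j+1))
        = emb2 D (β (j-1)) + emb2 D (β (j+2)) := hαF.symm.trans hα2
    have hx : ((aN:ℝ) - ((v j : ℝ) - 1)) * emb1 D (β j)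
        = (((v (j+1) : ℝ) - 1) - (bN:ℝ)) * emb1 D (β (j+1)) := by
      linear_combination hE3 - hcombE
    have hy : ((aN:ℝ) - ((v j : ℝ) - 1)) * emb2 D (β j)
        = (((v (j+1) : ℝ) - 1) - (bN:ℝ)) * emb2 D (β (j+1)) := by
      linear_combination hF3 - hcombF
    obtain ⟨hx0, hy0⟩ := indep_zero hx hy (epos j) (elt (show j < j + 1 by omega))
      (fpos (j+1)) (flt (show j < j + 1 by omega))
    have haZ : (aN : ℤ) = v j - 1 := by
      have : ((aN:ℤ):ℝ) = ((v j - 1 : ℤ):ℝ) := by push_cast; linarith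
      exact_mod_cast this
    have hbZ : (bN : ℤ) = v (j+1) - 1 := by
      have : ((bN:ℤ):ℝ) = ((v (j+1) - 1 : ℤ):ℝ) := by push_cast; linarith
      exact_mod_cast this
    refine Or.inr (Or.inl ?_)
    rw [← hts, htdecomp, htl0, hth0, htmeq,
      show (v j - 1).toNat = aN by omega, show (v (j+1) - 1).toNat = bN by omega]
    simp [Multiset.map_add, Multiset.map_replicate]
  · -- Case iii : tl = 0, th = {m}
    have hm : j + 2 ≤ m := hmem_th m (by rw [hth1]; exact Multiset.mem_singleton_self m)
    rw [htl0, hth1] at hE3 hF3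
    simp only [Multiset.map_zero, Multiset.sum_zero, zero_add, add_zero,
      Multiset.map_singleton, Multiset.sum_singleton] at hE3 hF3
    by_cases hmeq : m = j + 2
    · subst hmeq
      have hx : ((v j : ℝ) - (aN:ℝ)) * emb1 D (β j) = ((bN:ℝ) + 1) * emb1 D (β (j+1)) := by
        linear_combination er2 - hE3
      have hy : ((v j : ℝ) - (aN:ℝ)) * emb2 D (β j) = ((bN:ℝ) + 1) * emb2 D (β (j+1)) := by
        linear_combination fr2 - hF3
      obtain ⟨-, hy0⟩ := indep_zero hx hy (epos j) (elt (show j < j + 1 by omega))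
        (fpos (j+1)) (flt (show j < j + 1 by omega))
      exfalso; linarith
    · have hm3 : j + 3 ≤ m := by omega
      have hem : emb1 D (β (j+3)) ≤ emb1 D (β m) := ele hm3
      have key : (aN:ℝ) * emb1 D (β j) + ((bN:ℝ) + (v (j+1):ℝ) - 1) * emb1 D (β (j+1))
          ≤ emb1 D (β (j-1)) + emb1 D (β j) := by
        linarith [hE3, hem, er4, er3,
          mul_le_mul_of_nonneg_right (hv2 (j+2)) (epos (j+2)).le]
      have hb2 : bN = 0 ∧ v (j+1) = 2 := by
        by_contra hcon
        have h6 : 1 ≤ bN ∨ 3 ≤ v (j+1) := by have := hβ.v_two_le (j+1); omega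
        have h5 : (2:ℝ) ≤ (bN:ℝ) + (v (j+1):ℝ) - 1 := by
          rcases h6 with h6 | h6
          · have h7 : (1:ℝ) ≤ (bN:ℝ) := by exact_mod_cast h6
            linarith [hv2 (j+1)]
          · have h7 : (3:ℝ) ≤ (v (j+1):ℝ) := by exact_mod_cast h6
            linarith
        linarith [key, mul_le_mul_of_nonneg_right h5 (epos (j+1)).le,
          mul_nonneg haN0 (epos j).le, elt (show j-1 < j by omega),
          elt (show j < j+1 by omega)]
      obtain ⟨hbN00, hvj12⟩ := hb2
      have hbR : (bN:ℝ) = 0 := by rw [hbN00]; norm_num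
      have hvR : (v (j+1):ℝ) = 2 := by exact_mod_cast hvj12
      rw [hbR, hvR] at key
      have haN00 : aN = 0 := by
        by_contra hcon
        have h7 : (1:ℝ) ≤ (aN:ℝ) := by exact_mod_cast Nat.one_le_iff_ne_zero.mpr hcon
        linarith [key, mul_le_mul_of_nonneg_right h7 (epos j).le,
          elt (show j-1 < j by omega), elt (show j < j+1 by omega)]
      exfalso
      have haR : (aN:ℝ) = 0 := by rw [haN00]; norm_num
      rw [haR, hbR] at hF3
      have hfm : emb2 D (β m) ≤ emb2 D (β (j+3)) := fle hm3
      linarith [hF3, hfm, flt (show (j+2:ℤ) < j+3 by omega), fpos (j-1)]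
  · -- Case ii : tl = {l}, th = 0
    have hl : l ≤ j - 1 := hmem_tl l (by rw [htl1]; exact Multiset.mem_singleton_self l)
    rw [htl1, hth0] at hE3 hF3
    simp only [Multiset.map_zero, Multiset.sum_zero, zero_add, add_zero,
      Multiset.map_singleton, Multiset.sum_singleton] at hE3 hF3
    by_cases hleq : l = j - 1
    · subst hleq
      have hx : ((aN:ℝ) + 1) * emb1 D (β j) = ((v (j+1):ℝ) - (bN:ℝ)) * emb1 D (β (j+1)) := by
        linear_combination hE3 - er3
      have hy : ((aN:ℝ) + 1) * emb2 D (β j) = ((v (j+1):ℝ) - (bN:ℝ)) * emb2 D (β (j+1)) := by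
        linear_combination hF3 - fr3
      obtain ⟨hx0, -⟩ := indep_zero hx hy (epos j) (elt (show j < j + 1 by omega))
        (fpos (j+1)) (flt (show j < j + 1 by omega))
      exfalso; linarith
    · have hl2 : l ≤ j - 2 := by omega
      have hfl : emb2 D (β (j-2)) ≤ emb2 D (β l) := fle hl2
      have key : ((aN:ℝ) + (v j:ℝ) - 1) * emb2 D (β j) + (bN:ℝ) * emb2 D (β (j+1))
          ≤ emb2 D (β (j+1)) + emb2 D (β (j+2)) := by
        linarith [hF3, hfl, fr1, fr2,
          mul_le_mul_of_nonneg_right (hv2 (j-1)) (fpos (j-1)).le]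
      have ha2 : aN = 0 ∧ v j = 2 := by
        by_contra hcon
        have h6 : 1 ≤ aN ∨ 3 ≤ v j := by have := hβ.v_two_le j; omega
        have h5 : (2:ℝ) ≤ (aN:ℝ) + (v j:ℝ) - 1 := by
          rcases h6 with h6 | h6
          · have h7 : (1:ℝ) ≤ (aN:ℝ) := by exact_mod_cast h6
            linarith [hv2 j]
          · have h7 : (3:ℝ) ≤ (v j:ℝ) := by exact_mod_cast h6
            linarith
        linarith [key, mul_le_mul_of_nonneg_right h5 (fpos j).le,
          mul_nonneg hbN0 (fpos (j+1)).le, flt (show j < j+1 by omega),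
          flt (show (j+1:ℤ) < j+2 by omega)]
      obtain ⟨haN00, hvj2⟩ := ha2
      have haR : (aN:ℝ) = 0 := by rw [haN00]; norm_num
      have hvR : (v j:ℝ) = 2 := by exact_mod_cast hvj2
      rw [haR, hvR] at key
      have hbN00 : bN = 0 := by
        by_contra hcon
        have h7 : (1:ℝ) ≤ (bN:ℝ) := by exact_mod_cast Nat.one_le_iff_ne_zero.mpr hcon
        linarith [key, mul_le_mul_of_nonneg_right h7 (fpos (j+1)).le,
          flt (show j < j+1 by omega), flt (show (j+1:ℤ) < j+2 by omega)]
      exfalso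
      have hbR : (bN:ℝ) = 0 := by rw [hbN00]; norm_num
      rw [haR, hbR] at hE3
      have hel : emb1 D (β l) ≤ emb1 D (β (j-2)) := ele hl2
      linarith [hE3, hel, elt (show j-2 < j-1 by omega), epos (j+2)]
  · -- Case iv : tl = {l}, th = {m}
    have hl : l ≤ j - 1 := hmem_tl l (by rw [htl1]; exact Multiset.mem_singleton_self l)
    have hm : j + 2 ≤ m := hmem_th m (by rw [hth1]; exact Multiset.mem_singleton_self m)
    rw [htl1, hth1] at hE3 hF3
    simp only [Multiset.map_singleton, Multiset.sum_singleton] at hE3 hF3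
    by_cases hleq : l = j - 1 <;> by_cases hmeq : m = j + 2
    · -- s = s₁
      subst hleq; subst hmeq
      have haN00 : aN = 0 := by
        by_contra hcon
        have h7 : (1:ℝ) ≤ (aN:ℝ) := by exact_mod_cast Nat.one_le_iff_ne_zero.mpr hcon
        linarith [hE3, mul_le_mul_of_nonneg_right h7 (epos j).le,
          mul_nonneg hbN0 (epos (j+1)).le, epos j]
      have haR : (aN:ℝ) = 0 := by rw [haN00]; norm_num
      rw [haR] at hE3
      have hbN00 : bN = 0 := by
        by_contra hcon
        have h7 : (1:ℝ) ≤ (bN:ℝ) := by exact_mod_cast Nat.one_le_iff_ne_zero.mpr hcon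
        linarith [hE3, mul_le_mul_of_nonneg_right h7 (epos (j+1)).le, epos (j+1)]
      refine Or.inl ?_
      rw [← hts, htdecomp, htl1, hth1, htmeq, haN00, hbN00]
      simp [Multiset.singleton_add]
    · exfalso
      subst hleq
      have hm3 : j + 3 ≤ m := by omega
      linarith [hE3, ele hm3, elt (show (j+2:ℤ) < j+3 by omega),
        mul_nonneg haN0 (epos j).le, mul_nonneg hbN0 (epos (j+1)).le]
    · exfalso
      subst hmeq
      have hl2 : l ≤ j - 2 := by omega
      linarith [hF3, fle hl2, flt (show j-2 < j-1 by omega),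
        mul_nonneg haN0 (fpos j).le, mul_nonneg hbN0 (fpos (j+1)).le]
    · -- the telescoping case
      have hl2 : l ≤ j - 2 := by omega
      have hm3 : j + 3 ≤ m := by omega
      have key : (aN:ℝ) * emb1 D (β j) + (bN:ℝ) * emb1 D (β (j+1)) < emb1 D (β j) := by
        linarith [hE3, epos l, ele hm3, er4, er3, er2,
          mul_le_mul_of_nonneg_right (hv2 (j+2)) (epos (j+2)).le,
          mul_le_mul_of_nonneg_right (hv2 (j+1)) (epos (j+1)).le,
          mul_le_mul_of_nonneg_right (hv2 j) (epos j).le,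
          elt (show j-1 < j by omega)]
      have haN00 : aN = 0 := by
        by_contra hcon
        have h7 : (1:ℝ) ≤ (aN:ℝ) := by exact_mod_cast Nat.one_le_iff_ne_zero.mpr hcon
        linarith [key, mul_le_mul_of_nonneg_right h7 (epos j).le,
          mul_nonneg hbN0 (epos (j+1)).le]
      have hbN00 : bN = 0 := by
        by_contra hcon
        have h7 : (1:ℝ) ≤ (bN:ℝ) := by exact_mod_cast Nat.one_le_iff_ne_zero.mpr hcon
        linarith [key, mul_le_mul_of_nonneg_right h7 (epos (j+1)).le,
          mul_nonneg haN0 (epos j).le, elt (show j < j+1 by omega)]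
      have haR : (aN:ℝ) = 0 := by rw [haN00]; norm_num
      have hbR : (bN:ℝ) = 0 := by rw [hbN00]; norm_num
      rw [haR, hbR] at hE3 hF3
      have heqE : ee D β l + ee D β m = ee D β (j-1) + ee D β (j+2) := by
        have h9 : emb1 D (β l) + emb1 D (β m) = emb1 D (β (j-1)) + emb1 D (β (j+2)) := by
          linarith [hE3]
        exact h9
      have heqF : ff D β l + ff D β m = ff D β (j-1) + ff D β (j+2) := by
        have h9 : emb2 D (β l) + emb2 D (β m) = emb2 D (β (j-1)) + emb2 D (β (j+2)) := by
          linarith [hF3]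
        exact h9
      refine Or.inr (Or.inr ?_)
      have hall : ∀ i0 : ℤ, j - 1 ≤ i0 → i0 ≤ j + 2 → v i0 = 2 := by
        intro i0 hi1 hi2
        by_contra hvne
        have hv3 : 3 ≤ v i0 := by have := hβ.v_two_le i0; omega
        have hv3R : (3:ℝ) ≤ (v i0 : ℝ) := by exact_mod_cast hv3
        have g1 := gg_step hβ (j-1); rw [show j-1+1 = j by ring] at g1
        have g2 := gg_step hβ j
        have g3 := gg_step hβ (j+1); rw [show j+1+1 = j+2 by ring] at g3
        have g4 := gg_step hβ (j+2); rw [show j+2+1 = j+3 by ring] at g4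
        have k1 := hh_step hβ (j-1); rw [show j-1+1 = j by ring] at k1
        have k2 := hh_step hβ j
        have k3 := hh_step hβ (j+1); rw [show j+1+1 = j+2 by ring] at k3
        have k4 := hh_step hβ (j+2); rw [show j+2+1 = j+3 by ring] at k4
        have n1 : (0:ℝ) ≤ ((v (j-1):ℝ) - 2) * ee D β (j-1) :=
          mul_nonneg (by linarith [hv2 (j-1)]) (ee_pos hβ (j-1)).le
        have n2 : (0:ℝ) ≤ ((v j:ℝ) - 2) * ee D β j :=
          mul_nonneg (by linarith [hv2 j]) (ee_pos hβ j).le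
        have n3 : (0:ℝ) ≤ ((v (j+1):ℝ) - 2) * ee D β (j+1) :=
          mul_nonneg (by linarith [hv2 (j+1)]) (ee_pos hβ (j+1)).le
        have n4 : (0:ℝ) ≤ ((v (j+2):ℝ) - 2) * ee D β (j+2) :=
          mul_nonneg (by linarith [hv2 (j+2)]) (ee_pos hβ (j+2)).le
        have p1 : (0:ℝ) ≤ ((v (j-1):ℝ) - 2) * ff D β (j-1) :=
          mul_nonneg (by linarith [hv2 (j-1)]) (ff_pos hβ (j-1)).le
        have p2 : (0:ℝ) ≤ ((v j:ℝ) - 2) * ff D β j :=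
          mul_nonneg (by linarith [hv2 j]) (ff_pos hβ j).le
        have p3 : (0:ℝ) ≤ ((v (j+1):ℝ) - 2) * ff D β (j+1) :=
          mul_nonneg (by linarith [hv2 (j+1)]) (ff_pos hβ (j+1)).le
        have p4 : (0:ℝ) ≤ ((v (j+2):ℝ) - 2) * ff D β (j+2) :=
          mul_nonneg (by linarith [hv2 (j+2)]) (ff_pos hβ (j+2)).le
        have hi0 : i0 = j-1 ∨ i0 = j ∨ i0 = j+1 ∨ i0 = j+2 := by omega
        have hgrowE : gg D β (j-1) + ee D β i0 ≤ gg D β (j+3) := by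
          rcases hi0 with h8 | h8 | h8 | h8 <;> rw [h8] at hv3R ⊢
          · linarith [g1, g2, g3, g4, n1, n2, n3, n4,
              mul_le_mul_of_nonneg_right (show (1:ℝ) ≤ (v (j-1):ℝ) - 2 by linarith)
                (ee_pos hβ (j-1)).le]
          · linarith [g1, g2, g3, g4, n1, n2, n3, n4,
              mul_le_mul_of_nonneg_right (show (1:ℝ) ≤ (v j:ℝ) - 2 by linarith)
                (ee_pos hβ j).le]
          · linarith [g1, g2, g3, g4, n1, n2, n3, n4,
              mul_le_mul_of_nonneg_right (show (1:ℝ) ≤ (v (j+1):ℝ) - 2 by linarith)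
                (ee_pos hβ (j+1)).le]
          · linarith [g1, g2, g3, g4, n1, n2, n3, n4,
              mul_le_mul_of_nonneg_right (show (1:ℝ) ≤ (v (j+2):ℝ) - 2 by linarith)
                (ee_pos hβ (j+2)).le]
        have hgrowF : hh D β (j-1) + ff D β i0 ≤ hh D β (j+3) := by
          rcases hi0 with h8 | h8 | h8 | h8 <;> rw [h8] at hv3R ⊢
          · linarith [k1, k2, k3, k4, p1, p2, p3, p4,
              mul_le_mul_of_nonneg_right (show (1:ℝ) ≤ (v (j-1):ℝ) - 2 by linarith)
                (ff_pos hβ (j-1)).le]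
          · linarith [k1, k2, k3, k4, p1, p2, p3, p4,
              mul_le_mul_of_nonneg_right (show (1:ℝ) ≤ (v j:ℝ) - 2 by linarith)
                (ff_pos hβ j).le]
          · linarith [k1, k2, k3, k4, p1, p2, p3, p4,
              mul_le_mul_of_nonneg_right (show (1:ℝ) ≤ (v (j+1):ℝ) - 2 by linarith)
                (ff_pos hβ (j+1)).le]
          · linarith [k1, k2, k3, k4, p1, p2, p3, p4,
              mul_le_mul_of_nonneg_right (show (1:ℝ) ≤ (v (j+2):ℝ) - 2 by linarith)
                (ff_pos hβ (j+2)).le]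
        obtain ⟨sN, hsNz⟩ : ∃ n : ℕ, (n:ℤ) = j - 1 - l := ⟨(j-1-l).toNat, by omega⟩
        obtain ⟨tN, htNz⟩ : ∃ n : ℕ, (n:ℤ) = m - (j + 2) := ⟨(m-(j+2)).toNat, by omega⟩
        have hsN1 : 1 ≤ sN := by omega
        have htN1 : 1 ≤ tN := by omega
        have tdE := tele_down (ee D β) (gg D β) (fun k => rfl) (fun k k' h => gg_mono hβ h)
          sN (j-1)
        rw [show j - 1 - (sN:ℤ) = l by omega] at tdE
        have tdF := tele_down (ff D β) (hh D β) (fun k => rfl) (fun k k' h => hh_mono hβ h)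
          sN (j-1)
        rw [show j - 1 - (sN:ℤ) = l by omega] at tdF
        have tuE := tele_up (ee D β) (gg D β) (fun k => rfl) (fun k k' h => gg_mono hβ h)
          tN (j+2)
        rw [show (j+2:ℤ) + 1 = j + 3 by ring, show (j+2:ℤ) + (tN:ℤ) = m by omega] at tuE
        have tuF := tele_up (ff D β) (hh D β) (fun k => rfl) (fun k k' h => hh_mono hβ h)
          tN (j+2)
        rw [show (j+2:ℤ) + 1 = j + 3 by ring, show (j+2:ℤ) + (tN:ℤ) = m by omega] at tuF
        have hstep1 : (tN:ℝ) * (gg D β (j-1) + ee D β i0) ≤ (tN:ℝ) * gg D β (j+3) :=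
          mul_le_mul_of_nonneg_left hgrowE (Nat.cast_nonneg tN)
        have hchainE : (tN:ℝ) * gg D β (j+3) ≤ (sN:ℝ) * gg D β (j-1) := by
          linarith [tuE, tdE, heqE]
        have htn1R : (1:ℝ) ≤ (tN:ℝ) := by exact_mod_cast htN1
        have hspos : 0 < (sN:ℝ) - (tN:ℝ) := by
          by_contra hcon
          push_neg at hcon
          have hmul : (sN:ℝ) * gg D β (j-1) ≤ (tN:ℝ) * gg D β (j-1) :=
            mul_le_mul_of_nonneg_right (by linarith) (gg_pos hβ (j-1)).le
          linarith [hstep1, hchainE, ee_pos hβ i0,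
            mul_le_mul_of_nonneg_right htn1R (ee_pos hβ i0).le]
        have hstep2 : (tN:ℝ) * (hh D β (j-1) + ff D β i0) ≤ (tN:ℝ) * hh D β (j+3) :=
          mul_le_mul_of_nonneg_left hgrowF (Nat.cast_nonneg tN)
        have hchainF : (tN:ℝ) * hh D β (j+3) ≤ (sN:ℝ) * hh D β (j-1) := by
          linarith [tuF, tdF, heqF]
        have hneg : ((sN:ℝ) - (tN:ℝ)) * hh D β (j-1) < 0 :=
          mul_neg_of_pos_of_neg hspos (hh_neg hβ (j-1))
        linarith [hstep2, hchainF, ff_pos hβ i0,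
          mul_le_mul_of_nonneg_right htn1R (ff_pos hβ i0).le, hneg]
      exact ⟨hall (j-1) (by omega) (by omega), hall j (by omega) (by omega),
        hall (j+1) (by omega) (by omega), hall (j+2) (by omega) (by omega)⟩

end S11
end S11main

namespace S11

variable {D : ℕ} {β : ℤ → OK} {v : ℤ → ℤ}

lemma s1_mem (hβ : BetaSeq D β v) (j : ℤ) (α : OK) (hpart1 : α = β (j - 1) + β (j + 2)) :
    (∀ x ∈ (β (j-1) ::ₘ {β (j+2)} : Multiset OK), Indec D x) ∧
      (β (j-1) ::ₘ {β (j+2)} : Multiset OK).sum = α := by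
  constructor
  · intro x hx
    rcases Multiset.mem_cons.mp hx with rfl | hx
    · exact hβ.indec _
    · rw [Multiset.mem_singleton.mp hx]; exact hβ.indec _
  · rw [Multiset.sum_cons, Multiset.sum_singleton, hpart1]

lemma s2_mem (hβ : BetaSeq D β v) (j : ℤ) (α : OK)
    (hα : α = (v j - 1) • β j + (v (j + 1) - 1) • β (j + 1)) :
    (∀ x ∈ (Multiset.replicate (v j - 1).toNat (β j) +
        Multiset.replicate (v (j + 1) - 1).toNat (β (j + 1)) : Multiset OK), Indec D x) ∧
      (Multiset.replicate (v j - 1).toNat (β j) +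
        Multiset.replicate (v (j + 1) - 1).toNat (β (j + 1)) : Multiset OK).sum = α := by
  constructor
  · intro x hx
    rcases Multiset.mem_add.mp hx with hx | hx
    · rw [Multiset.eq_of_mem_replicate hx]; exact hβ.indec _
    · rw [Multiset.eq_of_mem_replicate hx]; exact hβ.indec _
  · rw [Multiset.sum_add, Multiset.sum_replicate, Multiset.sum_replicate]
    rw [← natCast_zsmul, ← natCast_zsmul,
      show (((v j - 1).toNat : ℤ)) = v j - 1 by have := hβ.v_two_le j; omega,
      show (((v (j+1) - 1).toNat : ℤ)) = v (j+1) - 1 by have := hβ.v_two_le (j+1); omega]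
    exact hα.symm

lemma s1_ne_s2 (hβ : BetaSeq D β v) (j : ℤ) :
    (β (j-1) ::ₘ {β (j+2)} : Multiset OK) ≠
      Multiset.replicate (v j - 1).toNat (β j) +
        Multiset.replicate (v (j + 1) - 1).toNat (β (j + 1)) := by
  intro heq
  have h1 : β (j-1) ∈ (β (j-1) ::ₘ {β (j+2)} : Multiset OK) := Multiset.mem_cons_self _ _
  rw [heq] at h1
  rcases Multiset.mem_add.mp h1 with hx | hx
  · have := beta_inj hβ (Multiset.eq_of_mem_replicate hx); omega
  · have := beta_inj hβ (Multiset.eq_of_mem_replicate hx); omega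

end S11


/-- `(v_j-1)β_j + (v_{j+1}-1)β_{j+1} = β_{j-1} + β_{j+2}` and it has
exactly two partitions into indecomposables iff `(v_{j-1},v_j,v_{j+1},v_{j+2}) ≠ (2,2,2,2)`. -/
theorem stmt11 (D : ℕ) (hD : 2 ≤ D) (hsq : Squarefree D)
    (β : ℤ → OK) (v : ℤ → ℤ) (hβ : BetaSeq D β v)
    (j : ℤ) (α : OK)
    (hα : α = (v j - 1) • β j + (v (j + 1) - 1) • β (j + 1)) :
    α = β (j - 1) + β (j + 2) ∧
      (pKI D α = 2 ↔
        ¬(v (j - 1) = 2 ∧ v j = 2 ∧ v (j + 1) = 2 ∧ v (j + 2) = 2)) := by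
  have hpart1 := S11.part1_eq hβ j α hα
  refine ⟨hpart1, ?_⟩
  have hs1 := S11.s1_mem hβ j α hpart1
  have hs2 := S11.s2_mem hβ j α hα
  have h12 := S11.s1_ne_s2 hβ (v := v) j
  constructor
  · -- pKI = 2 → not all 2
    intro hcard
    by_contra hv
    obtain ⟨h1, h2, h3, h4⟩ := hv
    -- third partition β (j-2) + β (j+3)
    have e1 : (2:ℤ) • β (j-1) = β (j-2) + β j := by
      have h := hβ.rel (j-1)
      rwa [h1, show j-1-1 = j-2 by ring, show j-1+1 = j by ring] at h
    have e2 : (2:ℤ) • β (j+2) = β (j+1) + β (j+3) := by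
      have h := hβ.rel (j+2)
      rwa [h4, show j+2-1 = j+1 by ring, show j+2+1 = j+3 by ring] at h
    have e3 : β j + β (j+1) = α := by
      rw [hα, h2, h3]; norm_num
    have hsum3 : β (j-2) + β (j+3) = α := by
      have h5 : β (j-2) + β (j+3) + (β j + β (j+1)) = (2:ℤ) • β (j-1) + (2:ℤ) • β (j+2) := by
        rw [e1, e2]; abel
      have h6 : (2:ℤ) • β (j-1) + (2:ℤ) • β (j+2) = (2:ℤ) • α := by
        rw [hpart1, smul_add]
      rw [e3, h6] at h5
      have h7 : (2:ℤ) • α = α + α := two_zsmul α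
      rw [h7] at h5
      exact add_right_cancel h5
    have hs3 : (∀ x ∈ (β (j-2) ::ₘ {β (j+3)} : Multiset OK), Indec D x) ∧
        (β (j-2) ::ₘ {β (j+3)} : Multiset OK).sum = α := by
      constructor
      · intro x hx
        rcases Multiset.mem_cons.mp hx with rfl | hx
        · exact hβ.indec _
        · rw [Multiset.mem_singleton.mp hx]; exact hβ.indec _
      · rw [Multiset.sum_cons, Multiset.sum_singleton]; exact hsum3
    have hβinj := S11.beta_inj hβ
    have h13 : (β (j-1) ::ₘ {β (j+2)} : Multiset OK) ≠ (β (j-2) ::ₘ {β (j+3)}) := by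
      intro heq
      have hm : β (j-1) ∈ (β (j-2) ::ₘ {β (j+3)} : Multiset OK) := by
        rw [← heq]; exact Multiset.mem_cons_self _ _
      rcases Multiset.mem_cons.mp hm with hx | hx
      · have := hβinj hx; omega
      · have := hβinj (Multiset.mem_singleton.mp hx); omega
    have h32 : (β (j-2) ::ₘ {β (j+3)} : Multiset OK) ≠
        Multiset.replicate (v j - 1).toNat (β j) +
          Multiset.replicate (v (j + 1) - 1).toNat (β (j + 1)) := by
      intro heq
      have hm : β (j-2) ∈ (β (j-2) ::ₘ {β (j+3)} : Multiset OK) := Multiset.mem_cons_self _ _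
      rw [heq] at hm
      rcases Multiset.mem_add.mp hm with hx | hx
      · have := hβinj (Multiset.eq_of_mem_replicate hx); omega
      · have := hβinj (Multiset.eq_of_mem_replicate hx); omega
    have hcard' : Set.ncard {s : Multiset OK | (∀ x ∈ s, Indec D x) ∧ s.sum = α} = 2 := hcard
    obtain ⟨x, y, hxy, hset⟩ := Set.ncard_eq_two.mp hcard'
    have m1 : (β (j-1) ::ₘ {β (j+2)} : Multiset OK) = x ∨ (β (j-1) ::ₘ {β (j+2)} : Multiset OK) = y := by
      have : (β (j-1) ::ₘ {β (j+2)} : Multiset OK) ∈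
          {s : Multiset OK | (∀ x ∈ s, Indec D x) ∧ s.sum = α} := hs1
      rw [hset] at this
      simpa using this
    have m2 : (Multiset.replicate (v j - 1).toNat (β j) +
          Multiset.replicate (v (j + 1) - 1).toNat (β (j + 1)) : Multiset OK) = x ∨
        (Multiset.replicate (v j - 1).toNat (β j) +
          Multiset.replicate (v (j + 1) - 1).toNat (β (j + 1)) : Multiset OK) = y := by
      have : (Multiset.replicate (v j - 1).toNat (β j) +
          Multiset.replicate (v (j + 1) - 1).toNat (β (j + 1)) : Multiset OK) ∈
          {s : Multiset OK | (∀ x ∈ s, Indec D x) ∧ s.sum = α} := hs2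
      rw [hset] at this
      simpa using this
    have m3 : (β (j-2) ::ₘ {β (j+3)} : Multiset OK) = x ∨
        (β (j-2) ::ₘ {β (j+3)} : Multiset OK) = y := by
      have : (β (j-2) ::ₘ {β (j+3)} : Multiset OK) ∈
          {s : Multiset OK | (∀ x ∈ s, Indec D x) ∧ s.sum = α} := hs3
      rw [hset] at this
      simpa using this
    rcases m1 with m1 | m1 <;> rcases m2 with m2 | m2 <;> rcases m3 with m3 | m3
    · exact h12 (m1.trans m2.symm)
    · exact h12 (m1.trans m2.symm)
    · exact h13 (m1.trans m3.symm)
    · exact h32 (m3.trans m2.symm)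
    · exact h32 (m3.trans m2.symm)
    · exact h13 (m1.trans m3.symm)
    · exact h12 (m1.trans m2.symm)
    · exact h12 (m1.trans m2.symm)
  · -- not all 2 → pKI = 2
    intro hv
    have hchar : {s : Multiset OK | (∀ x ∈ s, Indec D x) ∧ s.sum = α}
        = {(β (j-1) ::ₘ {β (j+2)} : Multiset OK),
           (Multiset.replicate (v j - 1).toNat (β j) +
             Multiset.replicate (v (j + 1) - 1).toNat (β (j + 1)) : Multiset OK)} := by
      ext s
      simp only [Set.mem_setOf_eq, Set.mem_insert_iff, Set.mem_singleton_iff]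
      constructor
      · rintro ⟨hind, hsum⟩
        rcases S11.main_cases hD hsq hβ j α hα s hind hsum with h | h | h
        · exact Or.inl h
        · exact Or.inr h
        · exact absurd h hv
      · rintro (rfl | rfl)
        · exact hs1
        · exact hs2
    show Set.ncard {s : Multiset OK | (∀ x ∈ s, Indec D x) ∧ s.sum = α} = 2
    rw [hchar]
    exact Set.ncard_pair h12
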